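/- Let Z₁,...,Z_{n+1} be exchangeable and almost surely distinct random variables, and set α* = Q̂_n((1 + 1/n)(α − 1/n)), the empirical (1+1/n)(α−1/n)-quantile of Z₁,...,Z_n. Then α − 1/n ≤ P(Z_{n+1} ≤ α*) ≤ α. -/

import Mathlib

open MeasureTheory Finset

/-- The empirical `β`-quantile of the sample `Z 0, …, Z (n-1)`: the
`⌈β·n⌉`-th order statistic. -/
noncomputable def empQuantile (n : ℕ) (Z : Fin n → ℝ) (β : ℝ) : ℝ :=
  sInf {x : ℝ | ⌈β * n⌉₊ ≤ (Finset.univ.filter (fun i : Fin n => Z i ≤ x)).card}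

lemma le_empQuantile_iff {n : ℕ} (hn : 0 < n) (W : Fin n → ℝ) (β : ℝ)
    (hk1 : 1 ≤ ⌈β * n⌉₊) (hkn : ⌈β * n⌉₊ ≤ n) (t : ℝ) :
    t ≤ empQuantile n W β ↔
      (univ.filter (fun i => W i < t)).card < ⌈β * n⌉₊ := by
  set k := ⌈β * n⌉₊ with hk
  have hne0 : Nonempty (Fin n) := ⟨⟨0, hn⟩⟩
  set S := {x : ℝ | k ≤ (univ.filter (fun i : Fin n => W i ≤ x)).card} with hS
  have hne : S.Nonempty := by
    obtain ⟨x₀, hx₀⟩ := Finset.exists_le (univ.image W)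
    refine ⟨x₀, ?_⟩
    have h1 : univ.filter (fun i : Fin n => W i ≤ x₀) = univ :=
      Finset.filter_true_of_mem fun i _ => hx₀ _ (mem_image_of_mem W (mem_univ i))
    simp only [hS, Set.mem_setOf_eq, h1, card_univ, Fintype.card_fin]
    exact hkn
  have hbdd : BddBelow S := by
    obtain ⟨m, _, hm⟩ := Finset.exists_min_image univ W ⟨⟨0, hn⟩, mem_univ _⟩
    refine ⟨W m, fun x hx => ?_⟩
    have : (univ.filter (fun i : Fin n => W i ≤ x)).Nonempty := by
      rw [← card_pos]; exact lt_of_lt_of_le hk1 hx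
    obtain ⟨i, hi⟩ := this
    have := (mem_filter.mp hi).2
    exact le_trans (hm i (mem_univ i)) this
  constructor
  · intro ht
    by_contra hcon
    push_neg at hcon
    set T := univ.filter (fun i : Fin n => W i < t) with hT
    have hTne : T.Nonempty := by rw [← card_pos]; exact lt_of_lt_of_le hk1 hcon
    have hxmax := Finset.le_max' (T.image W)
    set x₀ := (T.image W).max' (hTne.image W) with hx₀
    have hx₀lt : x₀ < t := by
      obtain ⟨i, hi, hie⟩ := Finset.mem_image.mp (Finset.max'_mem (T.image W) (hTne.image W))
      rw [hx₀, ← hie]; exact (mem_filter.mp hi).2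
    have hx₀S : x₀ ∈ S := by
      refine le_trans hcon (Finset.card_le_card ?_)
      intro i hi
      have hi' := hi
      rw [mem_filter] at hi ⊢
      exact ⟨hi.1, hxmax _ (mem_image_of_mem W hi')⟩
    have : empQuantile n W β ≤ x₀ := csInf_le hbdd hx₀S
    linarith [le_trans ht this]
  · intro hcard
    refine le_csInf hne fun x hx => ?_
    by_contra hxt
    push_neg at hxt
    have hsub : univ.filter (fun i : Fin n => W i ≤ x) ⊆ univ.filter (fun i : Fin n => W i < t) := by
      intro i hi
      rw [mem_filter] at hi ⊢
      exact ⟨hi.1, lt_of_le_of_lt hi.2 hxt⟩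
    have := le_trans hx (Finset.card_le_card hsub)
    omega

/-- Rank of coordinate `j` in the vector `v`. -/
noncomputable def rankF (m : ℕ) (j : Fin m) (v : Fin m → ℝ) : ℕ :=
  (univ.filter fun i => v i < v j).card

lemma rankF_measurable {m : ℕ} (j : Fin m) : Measurable (rankF m j) := by
  unfold rankF
  simp_rw [Finset.card_filter]
  refine Finset.measurable_sum _ fun i _ => Measurable.ite ?_ measurable_const measurable_const
  exact measurableSet_lt (measurable_pi_apply i) (measurable_pi_apply j)

lemma rankF_comp_perm {m : ℕ} (π : Equiv.Perm (Fin m)) (v : Fin m → ℝ) (j : Fin m) :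
    rankF m j (v ∘ π) = rankF m (π j) v := by
  unfold rankF
  refine Finset.card_bij (fun i _ => π i) (fun i hi => mem_filter.mpr ⟨mem_univ _, ?_⟩)
    (fun a _ b _ h => π.injective h) (fun b hb => ⟨π.symm b, mem_filter.mpr ⟨mem_univ _, ?_⟩, by simp⟩)
  · exact (mem_filter.mp hi).2
  · simpa using (mem_filter.mp hb).2

lemma rankF_lt {m : ℕ} (j : Fin m) (v : Fin m → ℝ) : rankF m j v < m := by
  have hsub : (univ.filter fun i => v i < v j) ⊆ univ.erase j := by
    intro i hi
    rw [mem_filter] at hi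
    refine Finset.mem_erase.mpr ⟨?_, mem_univ _⟩
    rintro rfl; exact lt_irrefl _ hi.2
  have h2 := Finset.card_le_card hsub
  have h3 : (univ.erase j).card = m - 1 := by simp
  have hm : 0 < m := j.pos
  unfold rankF; omega

lemma rankF_injective {m : ℕ} (v : Fin m → ℝ) (hv : Function.Injective v) :
    Function.Injective fun j => rankF m j v := by
  intro j j' h
  by_contra hne
  have hvne : v j ≠ v j' := fun he => hne (hv he)
  wlog hlt : v j < v j' generalizing j j'
  · exact this h.symm (Ne.symm hne) hvne.symm (lt_of_le_of_ne (not_lt.mp hlt) hvne.symm)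
  have hss : (univ.filter fun i => v i < v j) ⊂ (univ.filter fun i => v i < v j') := by
    refine Finset.ssubset_iff_of_subset (fun i hi => mem_filter.mpr
      ⟨mem_univ _, lt_trans (mem_filter.mp hi).2 hlt⟩) |>.mpr ?_
    exact ⟨j, mem_filter.mpr ⟨mem_univ _, hlt⟩, fun hc => lt_irrefl _ (mem_filter.mp hc).2⟩
  exact absurd h (Nat.ne_of_lt (Finset.card_lt_card hss))

lemma rankF_surj {m : ℕ} (v : Fin m → ℝ) (hv : Function.Injective v) (r : ℕ) (hr : r < m) :
    ∃ j, rankF m j v = r := by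
  have hbij : Function.Bijective (fun j : Fin m => (⟨rankF m j v, rankF_lt j v⟩ : Fin m)) := by
    refine Finite.injective_iff_bijective.mp fun a b h => rankF_injective v hv ?_
    exact congrArg Fin.val h
  obtain ⟨j, hj⟩ := hbij.2 ⟨r, hr⟩
  exact ⟨j, congrArg Fin.val hj⟩

lemma rankF_last_castSucc {n : ℕ} (v : Fin (n + 1) → ℝ) :
    rankF (n + 1) (Fin.last n) v
      = (univ.filter fun i : Fin n => v i.castSucc < v (Fin.last n)).card := by
  unfold rankF
  simp_rw [Finset.card_filter]
  rw [Fin.sum_univ_castSucc]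
  simp

/-- **FWER of the tuned (adaptive-alpha) procedure.**
If `Z 0, …, Z n` are exchangeable and a.s. distinct, and
`α* = Q̂_n((1+1/n)(α−1/n))` is the empirical `(1+1/n)(α−1/n)`-quantile of
`Z 1, …, Z n`, then `α − 1/n ≤ P(Z_{n+1} ≤ α*) ≤ α`. -/
theorem tuned_procedure_FWER_bounds
    {Ω : Type*} [MeasurableSpace Ω] (P : Measure Ω) [IsProbabilityMeasure P]
    (n : ℕ) (hn : 0 < n) (Z : Fin (n + 1) → Ω → ℝ)
    (hZ : ∀ i, Measurable (Z i))
    (hexch : ∀ π : Equiv.Perm (Fin (n + 1)),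
      Measure.map (fun ω => fun i => Z (π i) ω) P
        = Measure.map (fun ω => fun i => Z i ω) P)
    (hdist : ∀ᵐ ω ∂P, Function.Injective (fun i => Z i ω))
    (α : ℝ) (hα : α ∈ Set.Ioo (1 / (n : ℝ)) 1) :
    ENNReal.ofReal (α - 1 / n) ≤
      P {ω | Z (Fin.last n) ω
        ≤ empQuantile n (fun i => Z i.castSucc ω) ((1 + 1 / n) * (α - 1 / n))} ∧
    P {ω | Z (Fin.last n) ω
        ≤ empQuantile n (fun i => Z i.castSucc ω) ((1 + 1 / n) * (α - 1 / n))}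
      ≤ ENNReal.ofReal α := by
  obtain ⟨hα1, hα2⟩ := hα
  have hn' : (0:ℝ) < n := Nat.cast_pos.mpr hn
  set β : ℝ := (1 + 1 / n) * (α - 1 / n) with hβ
  set k : ℕ := ⌈β * n⌉₊ with hkdef
  set x : ℝ := ((n:ℝ) + 1) * (α - 1 / n) with hxdef
  have hβx : β * n = x := by rw [hβ, hxdef]; field_simp
  have hα1' : 0 < α - 1 / n := by linarith
  have hx0 : 0 < x := by rw [hxdef]; positivity
  have hkx : x ≤ k := by rw [hkdef, hβx]; exact Nat.le_ceil x
  have hk1 : 1 ≤ k := by rw [hkdef, hβx]; exact Nat.one_le_iff_ne_zero.mpr (by positivity)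
  have hxe : x + 1 = ((n:ℝ) + 1) * α - 1 / n := by rw [hxdef]; field_simp; ring
  have hkub : (k:ℝ) < ((n:ℝ) + 1) * α := by
    have h1 : (k:ℝ) < x + 1 := by rw [hkdef, hβx]; exact Nat.ceil_lt_add_one hx0.le
    have h2 : (0:ℝ) < 1 / n := by positivity
    linarith
  have hkn : k ≤ n := by
    have h1 : (k:ℝ) < (n:ℝ) + 1 := by nlinarith
    have h2 : k < n + 1 := by exact_mod_cast h1
    omega
  -- the vector of observations
  set V : Ω → Fin (n + 1) → ℝ := fun ω i => Z i ω with hV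
  have hVm : Measurable V := measurable_pi_lambda _ fun i => hZ i
  set E : ℕ → Set Ω := fun r => {ω | rankF (n + 1) (Fin.last n) (V ω) = r} with hE
  have hEm : ∀ r, MeasurableSet (E r) := fun r =>
    hVm (rankF_measurable _ (measurableSet_singleton r))
  -- exchangeability: each index has the same rank distribution
  have hswap : ∀ (j : Fin (n + 1)) (r : ℕ),
      P {ω | rankF (n + 1) j (V ω) = r} = P (E r) := by
    intro j r
    set π := Equiv.swap (Fin.last n) j with hπ
    have hπm : Measurable (fun ω => fun i => Z (π i) ω) :=
      measurable_pi_lambda _ fun i => hZ _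
    have hA : MeasurableSet ((rankF (n + 1) (Fin.last n)) ⁻¹' {r}) :=
      rankF_measurable _ (measurableSet_singleton r)
    have h1 := congrArg (fun μ => μ ((rankF (n + 1) (Fin.last n)) ⁻¹' {r})) (hexch π)
    simp only [Measure.map_apply hπm hA, Measure.map_apply hVm hA] at h1
    have hset : (fun ω => fun i => Z (π i) ω) ⁻¹' ((rankF (n + 1) (Fin.last n)) ⁻¹' {r})
        = {ω | rankF (n + 1) j (V ω) = r} := by
      ext ω
      simp only [Set.mem_preimage, Set.mem_singleton_iff, Set.mem_setOf_eq]
      have heq : (fun i => Z (π i) ω) = V ω ∘ π := rfl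
      rw [heq, rankF_comp_perm]
      rw [hπ, Equiv.swap_apply_left]
    rw [← hset, h1]
    rfl
  -- the a.s. distinctness set
  set D : Set Ω := ⋂ (i : Fin (n + 1)) (j : Fin (n + 1)) (_ : i ≠ j), {ω | Z i ω ≠ Z j ω}
    with hD
  have hDm : MeasurableSet D := by
    refine MeasurableSet.iInter fun i => MeasurableSet.iInter fun j =>
      MeasurableSet.iInter fun _ => ?_
    exact (measurableSet_eq_fun (hZ i) (hZ j)).compl
  have hDinj : ∀ ω, ω ∈ D ↔ Function.Injective (fun i => Z i ω) := by
    intro ω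
    simp only [hD, Set.mem_iInter, Set.mem_setOf_eq]
    constructor
    · intro h i j hij
      by_contra hne
      exact h i j hne hij
    · intro h i j hij hc
      exact hij (h hc)
  have hD1 : P D = 1 := by
    rw [← prob_compl_eq_zero_iff hDm]
    refine measure_mono_null ?_ (ae_iff.mp hdist)
    intro ω hω
    simp only [Set.mem_compl_iff] at hω
    simp only [Set.mem_setOf_eq]
    exact fun hinj => hω ((hDinj ω).mpr hinj)
  have hDc0 : P Dᶜ = 0 := (prob_compl_eq_zero_iff hDm).mpr hD1
  -- each rank value has probability 1/(n+1)
  have hErank : ∀ r : ℕ, r < n + 1 → P (E r) = ((n:ENNReal) + 1)⁻¹ := by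
    intro r hr
    set E' : Fin (n + 1) → Set Ω := fun j => {ω | rankF (n + 1) j (V ω) = r} ∩ D with hE'
    have hE'm : ∀ j, MeasurableSet (E' j) :=
      fun j => (hVm (rankF_measurable j (measurableSet_singleton r))).inter hDm
    have hdisj : Pairwise (Function.onFun Disjoint E') := by
      intro j j' hjj'
      refine Set.disjoint_left.mpr fun ω hω hω' => hjj' ?_
      have hinj := (hDinj ω).mp hω.2
      exact rankF_injective (V ω) hinj (hω.1.trans hω'.1.symm)
    have hcover : (⋃ j, E' j) = D := by
      ext ω
      simp only [Set.mem_iUnion, hE', Set.mem_inter_iff, Set.mem_setOf_eq]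
      constructor
      · rintro ⟨j, _, hωD⟩; exact hωD
      · intro hωD
        obtain ⟨j, hj⟩ := rankF_surj (V ω) ((hDinj ω).mp hωD) r hr
        exact ⟨j, hj, hωD⟩
    have hsum : ∑ j : Fin (n + 1), P (E' j) = 1 := by
      rw [← tsum_fintype (L := .unconditional _), ← measure_iUnion hdisj hE'm, hcover, hD1]
    have hE'eq : ∀ j, P (E' j) = P {ω | rankF (n + 1) j (V ω) = r} := by
      intro j
      refine le_antisymm (measure_mono Set.inter_subset_left) ?_
      calc P {ω | rankF (n + 1) j (V ω) = r}
          ≤ P (E' j ∪ Dᶜ) := by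
            refine measure_mono fun ω hω => ?_
            by_cases hωD : ω ∈ D
            · exact Or.inl ⟨hω, hωD⟩
            · exact Or.inr hωD
        _ ≤ P (E' j) + P Dᶜ := measure_union_le _ _
        _ = P (E' j) := by rw [hDc0, add_zero]
    have hsum2 : (n + 1 : ENNReal) * P (E r) = 1 := by
      have : ∑ j : Fin (n + 1), P (E r) = 1 := by
        rw [← hsum]
        exact Finset.sum_congr rfl fun j _ => ((hE'eq j).trans (hswap j r)).symm
      rw [Finset.sum_const, card_univ, Fintype.card_fin, nsmul_eq_mul] at this
      have hc : ((n + 1 : ℕ) : ENNReal) = (n : ENNReal) + 1 := by push_cast; ring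
      rwa [hc] at this
    have hne0 : ((n:ENNReal) + 1) ≠ 0 := by simp
    have hnet : ((n:ENNReal) + 1) ≠ ⊤ := by simp
    calc P (E r) = ((n:ENNReal) + 1)⁻¹ * (((n:ENNReal) + 1) * P (E r)) := by
          rw [← mul_assoc, ENNReal.inv_mul_cancel hne0 hnet, one_mul]
      _ = ((n:ENNReal) + 1)⁻¹ := by rw [hsum2, mul_one]
  -- rewrite the target event via ranks
  have htarget : {ω | Z (Fin.last n) ω ≤ empQuantile n (fun i => Z i.castSucc ω) β}
      = ⋃ r ∈ Finset.range k, E r := by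
    ext ω
    simp only [Set.mem_setOf_eq, Set.mem_iUnion, Finset.mem_range, hE]
    rw [le_empQuantile_iff hn _ β (hkdef ▸ hk1) (hkdef ▸ hkn)]
    rw [← hkdef]
    constructor
    · intro h
      exact ⟨rankF (n + 1) (Fin.last n) (V ω), by rwa [rankF_last_castSucc], rfl⟩
    · rintro ⟨r, hr, hrank⟩
      rw [rankF_last_castSucc] at hrank
      simp only [hV] at hrank
      omega
  have hdisjE : (↑(Finset.range k) : Set ℕ).PairwiseDisjoint E := by
    intro r _ r' _ hne
    refine Set.disjoint_left.mpr fun ω hω hω' => hne ?_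
    exact hω.symm.trans hω'
  have hP : P {ω | Z (Fin.last n) ω ≤ empQuantile n (fun i => Z i.castSucc ω) β}
      = (k : ENNReal) * ((n:ENNReal) + 1)⁻¹ := by
    rw [htarget, measure_biUnion_finset hdisjE (fun r _ => hEm r)]
    rw [Finset.sum_congr rfl (fun r hr => hErank r (by
      have := Finset.mem_range.mp hr; omega))]
    rw [Finset.sum_const, Finset.card_range, nsmul_eq_mul]
  have hofReal : (k : ENNReal) * ((n:ENNReal) + 1)⁻¹ = ENNReal.ofReal ((k:ℝ) / ((n:ℝ) + 1)) := by
    rw [ENNReal.ofReal_div_of_pos (by positivity), ENNReal.ofReal_natCast, div_eq_mul_inv]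
    congr 1
    rw [ENNReal.ofReal_add (by positivity) zero_le_one, ENNReal.ofReal_natCast,
      ENNReal.ofReal_one]
  constructor
  · rw [hP, hofReal]
    apply ENNReal.ofReal_le_ofReal
    rw [le_div_iff₀ (by positivity)]
    nlinarith
  · rw [hP, hofReal]
    apply ENNReal.ofReal_le_ofReal
    rw [div_le_iff₀ (by positivity)]
    nlinarith
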